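/- Let p > 1, α > 0, γ > 0, r₀ ∈ ℝ, β : [0,T] → ℝ⁺ continuous, and let (r_t) follow the Hull-White model dr_t = α(β(t) - r_t)dt + γ dW_t. Then there is a constant c_p, independent of the step size h = T/n, such that E[exp(-2p ∑_{i=0}^{n-1} r_{ih} h)] ≤ c_p for all n ∈ ℕ⁺; i.e., the exponential moments of the Riemann sums of the rate are uniformly bounded in the step size. -/

import Mathlib

open MeasureTheory Real ProbabilityTheory
open scoped ENNReal NNReal

lemma hw_gauss_lintegral (v : ℝ≥0) (l : ℝ) :
    ∫⁻ x, ENNReal.ofReal (Real.exp (l * x)) ∂(gaussianReal 0 v)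
      = ENNReal.ofReal (Real.exp ((v : ℝ) * l ^ 2 / 2)) := by
  have hφ : Measurable fun x : ℝ => ENNReal.ofReal (Real.exp (l * x)) := by
    fun_prop
  by_cases hv : v = 0
  · subst hv
    rw [gaussianReal_zero_var, lintegral_dirac]
    simp
  · rw [gaussianReal_of_var_ne_zero _ hv,
      lintegral_withDensity_eq_lintegral_mul _ (measurable_gaussianPDF _ _) hφ]
    have hvpos : (0:ℝ) < (v:ℝ) := by
      have := hv; positivity
    have key : ∀ x : ℝ, gaussianPDF 0 v x * ENNReal.ofReal (Real.exp (l * x))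
        = ENNReal.ofReal (Real.exp ((v : ℝ) * l ^ 2 / 2)) * gaussianPDF ((v : ℝ) * l) v x := by
      intro x
      rw [gaussianPDF, gaussianPDF, ← ENNReal.ofReal_mul (gaussianPDFReal_nonneg _ _ _),
        ← ENNReal.ofReal_mul (Real.exp_nonneg _)]
      congr 1
      have hexp : -(x - 0) ^ 2 / (2 * (v:ℝ)) + l * x
          = (v:ℝ) * l ^ 2 / 2 + -(x - (v:ℝ) * l) ^ 2 / (2 * (v:ℝ)) := by
        field_simp
        ring
      simp only [gaussianPDFReal]
      rw [mul_assoc, ← Real.exp_add, hexp, Real.exp_add]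
      ring
    simp only [Pi.mul_apply]
    simp_rw [key]
    rw [lintegral_const_mul _ (measurable_gaussianPDF _ _),
      lintegral_gaussianPDF_eq_one _ hv, mul_one]


set_option maxHeartbeats 2000000 in
lemma hw_aux {Ω : Type*} [MeasurableSpace Ω] (P : Measure Ω) [IsProbabilityMeasure P]
    (T : ℝ) (p : ℝ) (hp : 0 < p)
    (α γ : ℝ) (hα : 0 < α) (r₀ : ℝ)
    (β : ℝ → ℝ) (hβpos : ∀ s ∈ Set.Icc (0:ℝ) T, 0 ≤ β s)
    (r : ℝ → Ω → ℝ) (hrmeas : ∀ t, Measurable (r t))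
    (hr0 : ∀ ω, r 0 ω = r₀)
    (hGauss : ∀ u t : ℝ, 0 ≤ u → u < t → t ≤ T →
      Measure.map (fun ω => r t ω - Real.exp (-α * (t - u)) * r u ω
          - α * ∫ s in u..t, Real.exp (-α * (t - s)) * β s) P =
        gaussianReal 0 ((γ^2 / (2 * α) * (1 - Real.exp (-2 * α * (t - u)))).toNNReal))
    (hIndep : ∀ u t : ℝ, 0 ≤ u → u < t → t ≤ T →
      Indep
        (MeasurableSpace.comap
          (fun ω => r t ω - Real.exp (-α * (t - u)) * r u ω
            - α * ∫ s in u..t, Real.exp (-α * (t - s)) * β s) inferInstance)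
        (⨆ s ∈ Set.Icc (0:ℝ) u, MeasurableSpace.comap (r s) inferInstance) P)
    (h : ℝ) (hh : 0 < h) (n : ℕ) (hnh : (n : ℝ) * h ≤ T) :
    ∀ k : ℕ, k < n → ∀ a : ℝ, 0 ≤ a → a + k ≤ n →
      ∫⁻ ω, ENNReal.ofReal (Real.exp (-(2*p*h) *
          ((∑ i ∈ Finset.range k, r (i*h) ω) + a * r (k*h) ω))) ∂P
        ≤ ENNReal.ofReal (Real.exp (2*p*T*|r₀| + 2*p^2*T^2*γ^2*(k*h))) := by
  intro k
  induction k with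
  | zero =>
    intro hk a ha0 han
    simp only [Finset.range_zero, Finset.sum_empty, Nat.cast_zero, zero_mul, hr0,
      zero_add, mul_zero, add_zero]
    rw [lintegral_const, measure_univ, mul_one]
    apply ENNReal.ofReal_le_ofReal
    apply Real.exp_le_exp.mpr
    have h1 : a * h ≤ T := by
      have : a ≤ (n:ℝ) := by push_cast at han; linarith
      nlinarith
    have h2 : -r₀ ≤ |r₀| := neg_le_abs r₀
    have h3 : (0:ℝ) ≤ |r₀| := abs_nonneg r₀
    have h5 : a * h * |r₀| ≤ T * |r₀| := mul_le_mul_of_nonneg_right h1 h3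
    have h6 : a * (-r₀) ≤ a * |r₀| := mul_le_mul_of_nonneg_left h2 ha0
    nlinarith [mul_nonneg ha0 hh.le, mul_nonneg (mul_nonneg hp.le ha0) hh.le,
      mul_le_mul_of_nonneg_left h6 (mul_pos (mul_pos two_pos hp) hh).le,
      mul_le_mul_of_nonneg_left h5 (mul_pos two_pos hp).le]
  | succ k IH =>
    intro hk1 a ha0 han
    push_cast at han ⊢
    have hkn : k < n := Nat.lt_of_succ_lt hk1
    set u : ℝ := (k : ℝ) * h with hu_def
    have hu : 0 ≤ u := mul_nonneg (Nat.cast_nonneg k) hh.le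
    set t : ℝ := ((k:ℝ) + 1) * h with ht_def
    have hut : u < t := by rw [hu_def, ht_def]; nlinarith
    have htT : t ≤ T := by
      have hk1n : ((k:ℝ) + 1) ≤ (n:ℝ) := by exact_mod_cast le_of_lt hk1
      have : t ≤ (n:ℝ) * h := by rw [ht_def]; nlinarith
      linarith
    have htu : t - u = h := by rw [hu_def, ht_def]; ring
    have hmap := hGauss u t hu hut htT
    have hind := hIndep u t hu hut htT
    set G : Ω → ℝ := fun ω => r t ω - Real.exp (-α * (t - u)) * r u ω
        - α * ∫ s in u..t, Real.exp (-α * (t - s)) * β s with hGdef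
    set m : ℝ := α * ∫ s in u..t, Real.exp (-α * (t - s)) * β s with hm_def
    have hGmeas : Measurable G := by
      rw [hGdef]
      exact ((hrmeas t).sub ((hrmeas u).const_mul _)).sub measurable_const
    have hm : 0 ≤ m := by
      rw [hm_def]
      refine mul_nonneg hα.le (intervalIntegral.integral_nonneg hut.le fun s hs => ?_)
      exact mul_nonneg (Real.exp_nonneg _) (hβpos s ⟨le_trans hu hs.1, le_trans hs.2 htT⟩)
    clear_value u t G m
    set l : ℝ := -(2*p*h)*a with hl_def
    set a' : ℝ := 1 + a * Real.exp (-α*(t-u)) with ha'_def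
    set C : ℝ := -(2*p*h)*a*m with hC_def
    clear_value l a' C
    have he1 : Real.exp (-α*(t-u)) ≤ 1 := by
      rw [Real.exp_le_one_iff, htu]; nlinarith
    have ha'0 : 0 ≤ a' := by
      rw [ha'_def]; nlinarith [mul_nonneg ha0 (Real.exp_nonneg (-α*(t-u)))]
    have ha'n : a' + (k:ℝ) ≤ (n:ℝ) := by
      have : a * Real.exp (-α*(t-u)) ≤ a := mul_le_of_le_one_right ha0 he1
      rw [ha'_def]; linarith
    have key : ∀ ω : Ω, ENNReal.ofReal (Real.exp (-(2*p*h) *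
          ((∑ i ∈ Finset.range (k+1), r (i*h) ω) + a * r t ω)))
        = ENNReal.ofReal (Real.exp (l * G ω)) * ENNReal.ofReal (Real.exp (-(2*p*h) *
          ((∑ i ∈ Finset.range k, r (i*h) ω) + a' * r u ω) + C)) := by
      intro ω
      rw [← ENNReal.ofReal_mul (Real.exp_nonneg _), ← Real.exp_add]
      congr 1
      rw [Real.exp_eq_exp]
      rw [Finset.sum_range_succ]
      simp only [hl_def, ha'_def, hC_def, hGdef, hu_def, ht_def]
      set S : ℝ := ∑ i ∈ Finset.range k, r ((i:ℝ)*h) ω with hS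
      ring
    have hφmeas : Measurable fun x : ℝ => ENNReal.ofReal (Real.exp (l * x)) := by fun_prop
    have hf1 : Measurable fun ω => ENNReal.ofReal (Real.exp (l * G ω)) :=
      hφmeas.comp hGmeas
    have hsum : Measurable fun ω => ∑ i ∈ Finset.range k, r ((i:ℝ)*h) ω :=
      Finset.measurable_sum _ (fun i _ => hrmeas _)
    have hf2 : Measurable fun ω => ENNReal.ofReal (Real.exp (-(2*p*h) *
        ((∑ i ∈ Finset.range k, r (i*h) ω) + a' * r u ω) + C)) :=
      ((((hsum.add ((hrmeas u).const_mul a')).const_mul (-(2*p*h))).add_const C).exp).ennreal_ofReal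
    set M : MeasurableSpace Ω := ⨆ s ∈ Set.Icc (0:ℝ) u, MeasurableSpace.comap (r s) inferInstance
      with hM_def
    clear_value M
    have hrM : ∀ i : ℕ, i ≤ k → Measurable[M] (r ((i:ℝ) * h)) := by
      intro i hi
      have hmem : (i:ℝ) * h ∈ Set.Icc (0:ℝ) u := by
        constructor
        · positivity
        · rw [hu_def]
          have : (i:ℝ) ≤ (k:ℝ) := by exact_mod_cast hi
          nlinarith
      rw [hM_def]
      exact Measurable.of_comap_le
        (le_biSup (fun s => MeasurableSpace.comap (r s) inferInstance) hmem)
    have hruM : Measurable[M] (r u) := by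
      rw [hu_def]; exact hrM k le_rfl
    have hf2M : Measurable[M] fun ω => ENNReal.ofReal (Real.exp (-(2*p*h) *
        ((∑ i ∈ Finset.range k, r (i*h) ω) + a' * r u ω) + C)) := by
      have hsumM : Measurable[M] fun ω => ∑ i ∈ Finset.range k, r ((i:ℝ)*h) ω :=
        Finset.measurable_sum _ (fun i hi => hrM i (le_of_lt (Finset.mem_range.mp hi)))
      exact ((((hsumM.add (hruM.const_mul a')).const_mul
        (-(2*p*h))).add_const C).exp).ennreal_ofReal
    have hle1 : MeasurableSpace.comap (fun ω => ENNReal.ofReal (Real.exp (l * G ω)))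
        inferInstance ≤ MeasurableSpace.comap G inferInstance :=
      Measurable.comap_le (hφmeas.comp (Measurable.of_comap_le le_rfl))
    have hle2 : MeasurableSpace.comap (fun ω => ENNReal.ofReal (Real.exp (-(2*p*h) *
        ((∑ i ∈ Finset.range k, r (i*h) ω) + a' * r u ω) + C))) inferInstance ≤ M :=
      Measurable.comap_le hf2M
    have hindep' : IndepFun (fun ω => ENNReal.ofReal (Real.exp (l * G ω)))
        (fun ω => ENNReal.ofReal (Real.exp (-(2*p*h) *
          ((∑ i ∈ Finset.range k, r (i*h) ω) + a' * r u ω) + C))) P :=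
      indep_of_indep_of_le_right (indep_of_indep_of_le_left hind hle1) hle2
    have hahT : a * h ≤ T := by
      have hk0 : (0:ℝ) ≤ (k:ℝ) := Nat.cast_nonneg k
      have han' : a ≤ (n:ℝ) := by linarith
      calc a * h ≤ (n:ℝ) * h := mul_le_mul_of_nonneg_right han' hh.le
        _ ≤ T := hnh
    have e1 : ∫⁻ ω, ENNReal.ofReal (Real.exp (l * G ω)) ∂P
        ≤ ENNReal.ofReal (Real.exp (2*p^2*T^2*γ^2*h)) := by
      have hmp := @lintegral_map Ω ℝ ((fun {m : MeasurableSpace Ω} (_ : @Measure Ω m) => m) P) _ P (fun x : ℝ => ENNReal.ofReal (Real.exp (l * x))) _ hφmeas hGmeas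
      rw [← hmp, hmap, hw_gauss_lintegral]
      apply ENNReal.ofReal_le_ofReal
      apply Real.exp_le_exp.mpr
      have hxnn : 0 ≤ γ^2 / (2*α) * (1 - Real.exp (-2*α*(t-u))) := by
        have h1 : Real.exp (-2*α*(t-u)) ≤ 1 := by
          rw [Real.exp_le_one_iff]; nlinarith
        have h2a : (0:ℝ) < 2*α := by linarith
        have := div_nonneg (sq_nonneg γ) h2a.le
        nlinarith
      rw [Real.coe_toNNReal _ hxnn]
      have hxle : γ^2 / (2*α) * (1 - Real.exp (-2*α*(t-u))) ≤ γ^2 * h := by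
        rw [htu]
        have := Real.add_one_le_exp (-2*α*h)
        have h2a : (0:ℝ) < 2*α := by linarith
        rw [div_mul_eq_mul_div, div_le_iff₀ h2a]
        nlinarith [sq_nonneg γ]
      have hl2 : l^2 ≤ 4*p^2*T^2 := by
        rw [hl_def]
        have hrw : (-(2*p*h)*a)^2 = 4*p^2*(a*h)^2 := by ring
        rw [hrw]
        have hah0 : 0 ≤ a*h := mul_nonneg ha0 hh.le
        have hsq : (a*h)^2 ≤ T^2 := pow_le_pow_left₀ hah0 hahT 2
        nlinarith [sq_nonneg p, hsq]
      have hγh : (0:ℝ) ≤ γ^2*h := by positivity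
      nlinarith [mul_le_mul hxle hl2 (sq_nonneg l) hγh]
    have hC0 : C ≤ 0 := by
      rw [hC_def]
      have h1 : 0 ≤ 2*p*h*(a*m) := mul_nonneg (by positivity) (mul_nonneg ha0 hm)
      have h2 : -(2*p*h)*a*m = -(2*p*h*(a*m)) := by ring
      rw [h2]
      exact neg_nonpos.mpr h1
    have e2 : ∫⁻ ω, ENNReal.ofReal (Real.exp (-(2*p*h) *
          ((∑ i ∈ Finset.range k, r (i*h) ω) + a' * r u ω) + C)) ∂P
        ≤ ENNReal.ofReal (Real.exp (2*p*T*|r₀| + 2*p^2*T^2*γ^2*((k:ℝ)*h))) := by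
      have hpt : ∀ ω : Ω, ENNReal.ofReal (Real.exp (-(2*p*h) *
            ((∑ i ∈ Finset.range k, r (i*h) ω) + a' * r u ω) + C))
          = ENNReal.ofReal (Real.exp (-(2*p*h) *
            ((∑ i ∈ Finset.range k, r (i*h) ω) + a' * r u ω))) * ENNReal.ofReal (Real.exp C) := by
        intro ω
        rw [← ENNReal.ofReal_mul (Real.exp_nonneg _), ← Real.exp_add]
      calc ∫⁻ ω, ENNReal.ofReal (Real.exp (-(2*p*h) *
            ((∑ i ∈ Finset.range k, r (i*h) ω) + a' * r u ω) + C)) ∂P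
          = (∫⁻ ω, ENNReal.ofReal (Real.exp (-(2*p*h) *
            ((∑ i ∈ Finset.range k, r (i*h) ω) + a' * r u ω))) ∂P) * ENNReal.ofReal (Real.exp C) := by
            rw [lintegral_congr hpt]
            exact lintegral_mul_const' _ _ ENNReal.ofReal_ne_top
        _ ≤ ENNReal.ofReal (Real.exp (2*p*T*|r₀| + 2*p^2*T^2*γ^2*((k:ℝ)*h))) * 1 := by
            refine mul_le_mul' ?_ ?_
            · have hIH := IH hkn a' ha'0 (by push_cast; linarith)
              rw [hu_def] at hIH ⊢
              exact hIH
            · rw [ENNReal.ofReal_le_one]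
              exact Real.exp_le_one_iff.mpr hC0
        _ = ENNReal.ofReal (Real.exp (2*p*T*|r₀| + 2*p^2*T^2*γ^2*((k:ℝ)*h))) := mul_one _
    calc ∫⁻ ω, ENNReal.ofReal (Real.exp (-(2*p*h) *
          ((∑ i ∈ Finset.range (k+1), r (i*h) ω) + a * r t ω))) ∂P
        = (∫⁻ ω, ENNReal.ofReal (Real.exp (l * G ω)) ∂P) * ∫⁻ ω, ENNReal.ofReal (Real.exp (-(2*p*h) *
            ((∑ i ∈ Finset.range k, r (i*h) ω) + a' * r u ω) + C)) ∂P := by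
          rw [lintegral_congr key]
          exact lintegral_mul_eq_lintegral_mul_lintegral_of_indepFun hf1 hf2 hindep'
      _ ≤ ENNReal.ofReal (Real.exp (2*p^2*T^2*γ^2*h)) *
            ENNReal.ofReal (Real.exp (2*p*T*|r₀| + 2*p^2*T^2*γ^2*((k:ℝ)*h))) := mul_le_mul' e1 e2
      _ ≤ ENNReal.ofReal (Real.exp (2*p*T*|r₀| + 2*p^2*T^2*γ^2*t)) := by
          rw [← ENNReal.ofReal_mul (Real.exp_nonneg _), ← Real.exp_add]
          apply ENNReal.ofReal_le_ofReal
          apply Real.exp_le_exp.mpr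
          rw [ht_def]
          apply le_of_eq
          ring



/-- for the Hull-White model, the exponential moments of the
Riemann sums of the rate are uniformly bounded in the step size.  The
Hull-White dynamics `dr_t = α(β(t) - r_t)dt + γ dW_t` are encoded through
the Gaussian Markov structure of the solution: for `u ≤ t` the innovation
`r_t - e^{-α(t-u)} r_u - α∫_u^t e^{-α(t-s)}β(s)ds` is a centered Gaussian
with variance `(γ²/(2α))(1 - e^{-2α(t-u)})`, independent of the past. -/
theorem stmt_10 {Ω : Type*} [MeasurableSpace Ω] (P : Measure Ω) [IsProbabilityMeasure P]
    (T : ℝ) (hT : 0 < T) (p : ℝ) (hp : 1 < p)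
    (α γ : ℝ) (hα : 0 < α) (hγ : 0 < γ) (r₀ : ℝ)
    (β : ℝ → ℝ) (hβ : ContinuousOn β (Set.Icc 0 T)) (hβpos : ∀ s ∈ Set.Icc (0:ℝ) T, 0 ≤ β s)
    (r : ℝ → Ω → ℝ) (hrmeas : ∀ t, Measurable (r t))
    (hr0 : ∀ ω, r 0 ω = r₀)
    (hGauss : ∀ u t : ℝ, 0 ≤ u → u < t → t ≤ T →
      Measure.map (fun ω => r t ω - Real.exp (-α * (t - u)) * r u ω
          - α * ∫ s in u..t, Real.exp (-α * (t - s)) * β s) P =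
        gaussianReal 0 ((γ^2 / (2 * α) * (1 - Real.exp (-2 * α * (t - u)))).toNNReal))
    (hIndep : ∀ u t : ℝ, 0 ≤ u → u < t → t ≤ T →
      Indep
        (MeasurableSpace.comap
          (fun ω => r t ω - Real.exp (-α * (t - u)) * r u ω
            - α * ∫ s in u..t, Real.exp (-α * (t - s)) * β s) inferInstance)
        (⨆ s ∈ Set.Icc (0:ℝ) u, MeasurableSpace.comap (r s) inferInstance) P) :
    ∃ c : ℝ, ∀ n : ℕ, 0 < n →
      (∫ ω, Real.exp (-2 * p * ∑ i ∈ Finset.range n, r (i * (T / n)) ω * (T / n)) ∂P) ≤ c := by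
  refine ⟨Real.exp (2*p*T*|r₀| + 2*p^2*T^2*γ^2*T), ?_⟩
  intro n hn
  obtain ⟨m, rfl⟩ : ∃ m, n = m + 1 := ⟨n - 1, (Nat.succ_pred_eq_of_pos hn).symm⟩
  set h : ℝ := T / ((m+1 : ℕ) : ℝ) with hh_def
  have hm1 : (0:ℝ) < ((m+1 : ℕ) : ℝ) := by positivity
  have hh : 0 < h := by rw [hh_def]; positivity
  have hnh : ((m+1 : ℕ) : ℝ) * h = T := by
    rw [hh_def]
    field_simp
  have key := hw_aux P T p (by linarith) α γ hα r₀ β hβpos r hrmeas hr0 hGauss hIndep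
    h hh (m+1) (le_of_eq hnh) m (Nat.lt_succ_self m) 1 zero_le_one
    (by push_cast; linarith)
  have hfun : ∀ ω : Ω, Real.exp (-2 * p * ∑ i ∈ Finset.range (m+1), r (i * h) ω * h)
      = Real.exp (-(2*p*h) * ((∑ i ∈ Finset.range m, r (i*h) ω) + 1 * r ((m:ℝ)*h) ω)) := by
    intro ω
    congr 1
    rw [Finset.sum_range_succ, ← Finset.sum_mul]
    ring
  simp only [hfun]
  have hmeas : Measurable fun ω => Real.exp (-(2*p*h) *
      ((∑ i ∈ Finset.range m, r (i*h) ω) + 1 * r ((m:ℝ)*h) ω)) := by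
    have hsum : Measurable fun ω => ∑ i ∈ Finset.range m, r ((i:ℝ)*h) ω :=
      Finset.measurable_sum _ (fun i _ => hrmeas _)
    exact ((hsum.add ((hrmeas _).const_mul 1)).const_mul (-(2*p*h))).exp
  rw [integral_eq_lintegral_of_nonneg_ae (ae_of_all _ fun ω => Real.exp_nonneg _)
    hmeas.aestronglyMeasurable]
  refine le_trans (ENNReal.toReal_mono ENNReal.ofReal_ne_top key) ?_
  rw [ENNReal.toReal_ofReal (Real.exp_nonneg _)]
  apply Real.exp_le_exp.mpr
  have hmh : (m:ℝ) * h ≤ T := by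
    rw [← hnh]
    push_cast
    nlinarith
  have hc0 : (0:ℝ) ≤ 2*p^2*T^2*γ^2 := by positivity
  nlinarith [mul_le_mul_of_nonneg_left hmh hc0]
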